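/- A finite simple graph G is a union of paths (i.e., G is acyclic and every vertex has degree at most 2) if and only if G admits an invisible order, i.e., an enumeration v_0, v_1, ..., v_{p-1} of all its vertices such that for all indices i < j, if v_i and v_j are adjacent then j = i + 1. -/

import Mathlib

open SimpleGraph

universe u

/-- getVert is injective on indices for a path. -/
lemma getVert_inj_of_isPath {V : Type u} {G : SimpleGraph V} {u v : V}
    {p : G.Walk u v} (hp : p.IsPath) :
    ∀ i j : ℕ, i ≤ p.length → j ≤ p.length → p.getVert i = p.getVert j → i = j := by
  induction p with
  | nil => intro i j hi hj _; simp [Walk.length_nil] at hi hj; omega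
  | @cons a b c h q ih =>
    rw [Walk.cons_isPath_iff] at hp
    intro i j hi hj hij
    match i, j with
    | 0, 0 => rfl
    | 0, j+1 =>
      exfalso
      apply hp.2
      rw [Walk.mem_support_iff_exists_getVert]
      refine ⟨j, ?_, by simpa [Walk.length_cons] using hj⟩
      simpa [Walk.getVert_zero, Walk.getVert_cons_succ] using hij.symm
    | i+1, 0 =>
      exfalso
      apply hp.2
      rw [Walk.mem_support_iff_exists_getVert]
      refine ⟨i, ?_, by simpa [Walk.length_cons] using hi⟩
      simpa [Walk.getVert_zero, Walk.getVert_cons_succ] using hij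
    | i+1, j+1 =>
      have := ih hp.1 i j (by simpa [Walk.length_cons] using hi)
        (by simpa [Walk.length_cons] using hj)
        (by simpa [Walk.getVert_cons_succ] using hij)
      omega

/-- A nonempty finite acyclic graph has a vertex with at most one neighbor. -/
lemma exists_leaf {V : Type u} [Fintype V] (G : SimpleGraph V) (hac : G.IsAcyclic)
    (v0 : V) : ∃ w : V, ∀ x y : V, G.Adj w x → G.Adj w y → x = y := by
  classical
  set N := Fintype.card V with hN
  let P : ℕ → Prop := fun k => ∃ (a b : V) (q : G.Walk a b), q.IsPath ∧ q.length = k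
  have hP0 : P 0 := ⟨v0, v0, Walk.nil, Walk.IsPath.nil, rfl⟩
  have hbdd : ∀ k, P k → k < N := by
    rintro k ⟨a, b, q, hq, rfl⟩; exact hq.length_lt
  let F : Finset ℕ := (Finset.range N).filter P
  have hF0 : 0 ∈ F := by
    simp only [F, Finset.mem_filter, Finset.mem_range]
    exact ⟨hbdd 0 hP0, hP0⟩
  have hFne : F.Nonempty := ⟨0, hF0⟩
  obtain ⟨a, b, q, hq, hlen⟩ : P (F.max' hFne) := (Finset.mem_filter.mp (F.max'_mem hFne)).2
  have hmax : ∀ k, P k → k ≤ F.max' hFne := by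
    intro k hk
    exact F.le_max' k (Finset.mem_filter.mpr ⟨Finset.mem_range.mpr (hbdd k hk), hk⟩)
  have hext : ∀ z, G.Adj b z → z ∈ q.support := by
    intro z hz
    by_contra hzs
    have hP : P (F.max' hFne + 1) := by
      refine ⟨z, a, Walk.cons hz.symm q.reverse, ?_, by simp [hlen]⟩
      rw [Walk.cons_isPath_iff]
      exact ⟨hq.reverse, by simpa [Walk.support_reverse] using hzs⟩
    have := hmax _ hP
    omega
  have hpen : ∀ z, G.Adj b z → z = q.getVert (q.length - 1) := by
    intro z hz
    have hzs := hext z hz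
    have hd : (q.dropUntil z hzs).IsPath := hq.dropUntil hzs
    have huniq : (⟨q.dropUntil z hzs, hd⟩ : G.Path z b) = Path.singleton hz.symm :=
      hac.path_unique _ _
    have hdl : (q.dropUntil z hzs).length = 1 := by
      have := congrArg (fun r : G.Path z b => r.val.length) huniq
      simpa [Path.singleton] using this
    have hspec := q.take_spec hzs
    rw [← hspec, Walk.length_append, hdl, Walk.getVert_append]
    simp
  refine ⟨b, fun x y hx hy => ?_⟩
  rw [hpen x hx, hpen y hy]

/-- Key induction: ordering starting at a prescribed near-leaf. -/
lemma exists_order : ∀ (n : ℕ) {V : Type u} [Fintype V] [DecidableEq V]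
    (G : SimpleGraph V), G.IsAcyclic → (∀ v, (G.neighborSet v).ncard ≤ 2) →
    Fintype.card V = n + 1 → ∀ w : V, (∀ x y, G.Adj w x → G.Adj w y → x = y) →
    ∃ e : Fin (n + 1) ≃ V, e 0 = w ∧ ∀ i j : Fin (n + 1), i < j →
      G.Adj (e i) (e j) → (j : ℕ) = (i : ℕ) + 1 := by
  intro n
  induction n with
  | zero =>
    intro V _ _ G hac hdeg hcard w hw
    obtain ⟨x, hx⟩ := Fintype.card_eq_one_iff.mp hcard
    refine ⟨Equiv.ofBijective (fun _ => w) ?_, rfl, ?_⟩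
    · constructor
      · intro i j _; exact Fin.ext (by omega)
      · intro v; exact ⟨0, by rw [hx v, hx w]⟩
    · intro i j hij
      rw [Fin.lt_def] at hij
      have := i.isLt; have := j.isLt
      omega
  | succ m ih =>
    intro V _ _ G hac hdeg hcard w hw
    let V' := {v : V // v ≠ w}
    have hcard' : Fintype.card V' = m + 1 := by
      have h1 : Fintype.card V' = Fintype.card V - Fintype.card {v : V // v = w} :=
        Fintype.card_subtype_compl _
      rw [h1, Fintype.card_subtype_eq, hcard]; omega
    let G' : SimpleGraph V' := G.comap Subtype.val
    have hadj' : ∀ a b : V', (G'.Adj a b ↔ G.Adj a.val b.val) := fun a b => Iff.rfl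
    have hac' : G'.IsAcyclic := by
      intro a c hc
      exact hac (c.map (SimpleGraph.Hom.comap Subtype.val G))
        ((Walk.map_isCycle_iff_of_injective Subtype.val_injective).mpr hc)
    have hdeg' : ∀ v : V', (G'.neighborSet v).ncard ≤ 2 := by
      intro v
      refine le_trans (Set.ncard_le_ncard_of_injOn (Subtype.val)
        (fun x hx => hx) (fun x _ y _ h => Subtype.ext h) (Set.toFinite _)) (hdeg v.val)
    obtain ⟨w', hw'leaf, hstart⟩ : ∃ w' : V',
        (∀ x y : V', G'.Adj w' x → G'.Adj w' y → x = y) ∧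
        (∀ x : V, G.Adj w x → x = w'.val) := by
      by_cases hiso : ∀ x, ¬ G.Adj w x
      · have : Nonempty V' := by
          rw [← Fintype.card_pos_iff, hcard']; omega
        obtain ⟨v0⟩ := this
        obtain ⟨w', hw'⟩ := exists_leaf G' hac' v0
        exact ⟨w', hw', fun x hx => absurd hx (hiso x)⟩
      · push_neg at hiso
        obtain ⟨u, hu⟩ := hiso
        have hune : u ≠ w := hu.ne'
        refine ⟨⟨u, hune⟩, ?_, fun x hx => hw x u hx hu⟩
        intro x y hx hy
        have hwmem : w ∈ G.neighborSet u := hu.symm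
        have hle : (G.neighborSet u \ {w}).ncard ≤ 1 := by
          have := Set.ncard_diff_singleton_add_one hwmem (Set.toFinite _)
          have h2 := hdeg u
          omega
        have hxm : x.val ∈ G.neighborSet u \ {w} := ⟨(hadj' _ _).mp hx, x.prop⟩
        have hym : y.val ∈ G.neighborSet u \ {w} := ⟨(hadj' _ _).mp hy, y.prop⟩
        exact Subtype.ext ((Set.ncard_le_one (Set.toFinite _)).mp hle _ hxm _ hym)
    obtain ⟨e', he'0, he'⟩ := ih G' hac' hdeg' hcard' w' hw'leaf
    let f : Fin (m + 2) → V := fun i => Fin.cases w (fun k => (e' k).val) i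
    have hf0 : f 0 = w := rfl
    have hfs : ∀ k : Fin (m + 1), f k.succ = (e' k).val := fun k => rfl
    have hbij : Function.Bijective f := by
      constructor
      · intro i j hij
        induction i using Fin.cases with
        | zero =>
          induction j using Fin.cases with
          | zero => rfl
          | succ j' => rw [hf0, hfs] at hij; exact absurd hij.symm (e' j').prop
        | succ i' =>
          induction j using Fin.cases with
          | zero => rw [hf0, hfs] at hij; exact absurd hij (e' i').prop
          | succ j' =>
            rw [hfs, hfs] at hij
            exact congrArg Fin.succ (e'.injective (Subtype.ext hij))
      · intro v
        by_cases hv : v = w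
        · exact ⟨0, by rw [hf0, hv]⟩
        · exact ⟨(e'.symm ⟨v, hv⟩).succ, by rw [hfs, Equiv.apply_symm_apply]⟩
    refine ⟨Equiv.ofBijective f hbij, hf0, ?_⟩
    intro i j hij hadj
    simp only [Equiv.ofBijective_apply] at hadj
    induction j using Fin.cases with
    | zero =>
      exfalso
      rw [Fin.lt_def] at hij
      simp at hij
    | succ j' =>
      induction i using Fin.cases with
      | zero =>
        rw [hf0, hfs] at hadj
        have : (e' j').val = w'.val := by rw [← hstart _ hadj]
        have : j' = 0 := e'.injective (by rw [he'0]; exact Subtype.ext this)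
        subst this
        simp
      | succ i' =>
        rw [hfs, hfs] at hadj
        have hlt : i' < j' := by
          rw [Fin.lt_def] at hij ⊢
          simpa using hij
        have := he' i' j' hlt ((hadj' _ _).mpr hadj)
        simp only [Fin.val_succ]
        omega



/-- A simple graph is a *union of paths* if it is acyclic and every vertex
has degree at most 2. -/
def IsUnionOfPaths {V : Type*} (G : SimpleGraph V) : Prop :=
  G.IsAcyclic ∧ ∀ v : V, (G.neighborSet v).ncard ≤ 2

/-- A finite simple graph is a union of paths iff it admits an *invisible order*:
an enumeration of all its vertices such that adjacent vertices with indices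
`i < j` satisfy `j = i + 1`. -/
theorem unionOfPaths_iff_invisibleOrder {V : Type*} [Fintype V]
    (G : SimpleGraph V) (p : ℕ) (hp : Fintype.card V = p) :
    IsUnionOfPaths G ↔
      ∃ e : Fin p ≃ V, ∀ i j : Fin p, i < j → G.Adj (e i) (e j) →
        (j : ℕ) = (i : ℕ) + 1 := by
  constructor
  · rintro ⟨hac, hdeg⟩
    classical
    cases p with
    | zero =>
      exact ⟨(Fintype.equivFinOfCardEq hp).symm, fun i => i.elim0⟩
    | succ n =>
      have hpos : 0 < Fintype.card V := by omega
      obtain ⟨v0⟩ := Fintype.card_pos_iff.mp hpos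
      obtain ⟨w, hw⟩ := exists_leaf G hac v0
      obtain ⟨e, _, he⟩ := exists_order n G hac hdeg hp w hw
      exact ⟨e, he⟩
  · rintro ⟨e, he⟩
    classical
    have hstep : ∀ x y : V, G.Adj x y →
        ((e.symm y : ℕ) = (e.symm x : ℕ) + 1 ∨ (e.symm x : ℕ) = (e.symm y : ℕ) + 1) := by
      intro x y hxy
      rcases lt_trichotomy (e.symm x) (e.symm y) with h | h | h
      · left; exact he _ _ h (by simpa using hxy)
      · exact absurd (e.symm.injective h) hxy.ne
      · right; exact he _ _ h (by simpa using hxy.symm)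
    have hinj : Function.Injective (fun x : V => (e.symm x : ℕ)) := by
      intro x y hxy
      exact e.symm.injective (Fin.val_injective hxy)
    constructor
    · intro v c hc
      have hsupne : c.support.toFinset.Nonempty :=
        ⟨v, List.mem_toFinset.mpr c.start_mem_support⟩
      obtain ⟨a, ha, hamax⟩ :=
        Finset.exists_max_image c.support.toFinset (fun x => (e.symm x : ℕ)) hsupne
      have ha' : a ∈ c.support := List.mem_toFinset.mp ha
      have key : ∀ (c' : G.Walk a a), c'.IsCycle →
          (∀ x ∈ c'.support, (e.symm x : ℕ) ≤ (e.symm a : ℕ)) → False := by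
        intro c' hc' hmax'
        cases c' with
        | nil => simpa using hc'.three_le_length
        | @cons _ b _ h q =>
          obtain ⟨hqp, hedge⟩ := (Walk.cons_isCycle_iff q h).mp hc'
          have hlen3 : 2 ≤ q.length := by
            have := hc'.three_le_length
            simpa using this
          set pe := q.getVert (q.length - 1) with hpe
          have hpadj : G.Adj pe a := by
            have := q.adj_getVert_succ (i := q.length - 1) (by omega)
            rwa [show q.length - 1 + 1 = q.length by omega, q.getVert_length] at this
          have hbmem : b ∈ (Walk.cons h q).support := by
            rw [Walk.support_cons]
            exact List.mem_cons_of_mem _ q.start_mem_support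
          have hpmem : pe ∈ (Walk.cons h q).support := by
            rw [Walk.support_cons]
            refine List.mem_cons_of_mem _ ?_
            rw [Walk.mem_support_iff_exists_getVert]
            exact ⟨q.length - 1, rfl, by omega⟩
          have hb_lt : (e.symm b : ℕ) < (e.symm a : ℕ) := by
            have hle := hmax' b hbmem
            have hne : (e.symm b : ℕ) ≠ (e.symm a : ℕ) := fun hh => h.ne (hinj hh).symm
            omega
          have hp_lt : (e.symm pe : ℕ) < (e.symm a : ℕ) := by
            have hle := hmax' pe hpmem
            have hne : (e.symm pe : ℕ) ≠ (e.symm a : ℕ) := fun hh => hpadj.ne (hinj hh)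
            omega
          have hb_eq : (e.symm b : ℕ) + 1 = (e.symm a : ℕ) := by
            rcases hstep a b h with h1 | h1 <;> omega
          have hp_eq : (e.symm pe : ℕ) + 1 = (e.symm a : ℕ) := by
            rcases hstep pe a hpadj with h1 | h1 <;> omega
          have hbpe : b = pe := hinj (show (e.symm b : ℕ) = (e.symm pe : ℕ) by omega)
          have : (0 : ℕ) = q.length - 1 := by
            apply getVert_inj_of_isPath hqp 0 (q.length - 1) (by omega) (by omega)
            rw [q.getVert_zero, ← hpe, ← hbpe]
          omega
      refine key (c.rotate a ha') (hc.rotate ha') ?_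
      intro x hx
      rw [Walk.support_eq_cons] at hx
      rcases List.mem_cons.mp hx with rfl | hx
      · exact le_refl _
      · refine hamax x (List.mem_toFinset.mpr ?_)
        exact List.mem_of_mem_tail (((Walk.support_rotate c a ha').mem_iff).mp hx)
    · intro v
      refine le_trans (Set.ncard_le_ncard_of_injOn (fun x => (e.symm x : ℕ))
        (t := {(e.symm v : ℕ) + 1, (e.symm v : ℕ) - 1}) ?_ (hinj.injOn) (Set.toFinite _)) ?_
      · intro x hx
        rcases hstep v x hx with h | h
        · left; exact h
        · right
          show (e.symm x : ℕ) = (e.symm v : ℕ) - 1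
          omega
      · exact le_trans (Set.ncard_insert_le _ _) (by simp)
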